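/- Let A be an n×n real symmetric matrix, let V_1 ∪ … ∪ V_m be an equitable partition of {1,…,n} for A with characteristic matrix S, and let B = Q(A) = Λ⁻¹ Sᵀ A S be the quotient matrix. Then for any basis {v_1,…,v_m} of ℝ^m consisting of eigenvectors of B, there exist vectors w_1,…,w_{n−m} ∈ ℝ^n, each an eigenvector of A, satisfying Sᵀ w_j = 0 for all j, such that {S v_1,…,S v_m, w_1,…,w_{n−m}} is a basis of ℝ^n consisting of eigenvectors of A. -/

import Mathlib

open Matrix Finset

private 
theorem AS_eq_SB {n m : ℕ}
    (A : Matrix (Fin n) (Fin n) ℝ)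
    (p : Fin n → Fin m) (hp : Function.Surjective p)
    (S : Matrix (Fin n) (Fin m) ℝ)
    (hS : S = fun i k => if p i = k then (1 : ℝ) else 0)
    (heq : ∀ i₁ i₂ : Fin n, p i₁ = p i₂ → ∀ l : Fin m,
        ∑ j ∈ Finset.univ.filter (fun j => p j = l), A i₁ j
          = ∑ j ∈ Finset.univ.filter (fun j => p j = l), A i₂ j)
    (Λ : Matrix (Fin m) (Fin m) ℝ)
    (hΛ : Λ = Matrix.diagonal fun k => ((Finset.univ.filter fun i => p i = k).card : ℝ))
    (B : Matrix (Fin m) (Fin m) ℝ) (hB : B = Λ⁻¹ * Sᵀ * A * S) :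
    A * S = S * B := by
  set c : Fin m → ℝ := fun k => ((Finset.univ.filter fun i => p i = k).card : ℝ) with hc
  have hcpos : ∀ k, 0 < c k := by
    intro k
    have h1 : (Finset.univ.filter fun i => p i = k).Nonempty := by
      obtain ⟨i, hi⟩ := hp k
      exact ⟨i, by simp [hi]⟩
    show (0 : ℝ) < ((Finset.univ.filter fun i => p i = k).card : ℝ)
    exact_mod_cast Finset.card_pos.2 h1
  have hcne : ∀ k, c k ≠ 0 := fun k => (hcpos k).ne'
  have hΛinv : Λ⁻¹ = Matrix.diagonal fun k => (c k)⁻¹ := by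
    apply Matrix.inv_eq_left_inv
    rw [hΛ, Matrix.diagonal_mul_diagonal]
    convert Matrix.diagonal_one using 2
    ext k
    exact inv_mul_cancel₀ (hcne k)
  set r : Fin n → Fin m → ℝ := fun i k => ∑ j ∈ Finset.univ.filter (fun j => p j = k), A i j with hr
  have hrc : ∀ i₁ i₂, p i₁ = p i₂ → ∀ k, r i₁ k = r i₂ k := heq
  have hAS : ∀ i k, (A * S) i k = r i k := by
    intro i k
    rw [Matrix.mul_apply]
    have h3 : r i k = ∑ j, if p j = k then A i j else 0 := Finset.sum_filter _ _
    rw [h3]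
    apply Finset.sum_congr rfl
    intro j _
    simp only [hS]
    by_cases h : p j = k
    · rw [if_pos h, if_pos h, mul_one]
    · rw [if_neg h, if_neg h, mul_zero]
  have hSAS : ∀ l k, (Sᵀ * A * S) l k = c l * r (hp l).choose k := by
    intro l k
    rw [Matrix.mul_assoc, Matrix.mul_apply]
    have h2 : ∀ i, Sᵀ l i * (A * S) i k = if p i = l then r (hp l).choose k else 0 := by
      intro i
      rw [hAS]
      simp only [Matrix.transpose_apply]; simp only [hS]
      by_cases h : p i = l
      · rw [if_pos h, if_pos h, one_mul]
        exact hrc i (hp l).choose (h.trans (hp l).choose_spec.symm) k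
      · rw [if_neg h, if_neg h, zero_mul]
    rw [Finset.sum_congr rfl fun i _ => h2 i, ← Finset.sum_filter, Finset.sum_const,
      nsmul_eq_mul]
  ext i k
  rw [hAS, Matrix.mul_apply,
    Finset.sum_eq_single (p i)
      (by intro b _ hb
          simp only [hS]
          rw [if_neg (Ne.symm hb), zero_mul])
      (by simp)]
  simp only [hS]
  rw [if_true, one_mul]
  rw [hB, hΛinv, show Matrix.diagonal (fun k => (c k)⁻¹) * Sᵀ * A * S
      = Matrix.diagonal (fun k => (c k)⁻¹) * (Sᵀ * A * S) by simp [Matrix.mul_assoc],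
    Matrix.diagonal_mul, hSAS, ← mul_assoc, inv_mul_cancel₀ (hcne (p i)), one_mul]
  exact hrc i (hp (p i)).choose ((hp (p i)).choose_spec).symm k

/-- Let `A` be an `n×n` real symmetric matrix, let `V_1 ∪ … ∪ V_m` be an
equitable partition of `{1,…,n}` for `A` (given by the surjective block-assignment map `p`)
with characteristic matrix `S`, and let `B = Q(A) = Λ⁻¹ Sᵀ A S` be the quotient matrix.
Then for any basis `{v_1,…,v_m}` of `ℝ^m` consisting of eigenvectors of `B`, there exist
vectors `w_1,…,w_{n−m} ∈ ℝ^n`, each an eigenvector of `A`, satisfying `Sᵀ w_j = 0` for all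
`j`, such that `{S v_1,…,S v_m, w_1,…,w_{n−m}}` is a basis of `ℝ^n` consisting of
eigenvectors of `A`. -/
theorem spectral_decomposition_equitable {n m : ℕ}
    (A : Matrix (Fin n) (Fin n) ℝ) (hsymm : A.IsSymm)
    (p : Fin n → Fin m) (hp : Function.Surjective p)
    (S : Matrix (Fin n) (Fin m) ℝ)
    (hS : S = fun i k => if p i = k then (1 : ℝ) else 0)
    (heq : ∀ i₁ i₂ : Fin n, p i₁ = p i₂ → ∀ l : Fin m,
        ∑ j ∈ Finset.univ.filter (fun j => p j = l), A i₁ j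
          = ∑ j ∈ Finset.univ.filter (fun j => p j = l), A i₂ j)
    (Λ : Matrix (Fin m) (Fin m) ℝ)
    (hΛ : Λ = Matrix.diagonal fun k => ((Finset.univ.filter fun i => p i = k).card : ℝ))
    (B : Matrix (Fin m) (Fin m) ℝ) (hB : B = Λ⁻¹ * Sᵀ * A * S)
    (v : Fin m → (Fin m → ℝ))
    (hvEig : ∀ k, ∃ μ : ℝ, B.mulVec (v k) = μ • v k)
    (hvLI : LinearIndependent ℝ v)
    (hvSpan : Submodule.span ℝ (Set.range v) = ⊤) :
    ∃ w : Fin (n - m) → (Fin n → ℝ),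
      (∀ j, ∃ μ : ℝ, A.mulVec (w j) = μ • w j) ∧
      (∀ j, Sᵀ.mulVec (w j) = 0) ∧
      (∀ k, ∃ μ : ℝ, A.mulVec (S.mulVec (v k)) = μ • S.mulVec (v k)) ∧
      LinearIndependent ℝ (Sum.elim (fun k => S.mulVec (v k)) w) ∧
      Submodule.span ℝ (Set.range (Sum.elim (fun k => S.mulVec (v k)) w)) = ⊤ := by
  have hASSB : A * S = S * B := AS_eq_SB A p hp S hS heq Λ hΛ B hB
  classical
  have hmn : m ≤ n := by
    have := Fintype.card_le_of_surjective p hp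
    simpa using this
  -- eigenvectors S v k
  have hSvEig : ∀ k, ∃ μ : ℝ, A.mulVec (S.mulVec (v k)) = μ • S.mulVec (v k) := by
    intro k
    obtain ⟨μ, hμ⟩ := hvEig k
    refine ⟨μ, ?_⟩
    rw [Matrix.mulVec_mulVec, hASSB, ← Matrix.mulVec_mulVec, hμ, Matrix.mulVec_smul]
  -- Euclidean setup
  set f : EuclideanSpace ℝ (Fin n) →ₗ[ℝ] EuclideanSpace ℝ (Fin n) := Matrix.toEuclideanLin A with hf
  set LS : EuclideanSpace ℝ (Fin m) →ₗ[ℝ] EuclideanSpace ℝ (Fin n) := Matrix.toEuclideanLin S with hLS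
  have hherm : A.IsHermitian := by
    rw [Matrix.IsHermitian, Matrix.conjTranspose_eq_transpose_of_trivial]
    exact hsymm
  have hfs : f.IsSymmetric := Matrix.isHermitian_iff_isSymmetric.1 hherm
  have hLSapp : ∀ (x : EuclideanSpace ℝ (Fin m)) (i : Fin n), LS x i = S.mulVec x i := by
    intro x i
    rfl
  have hfapp : ∀ (x : EuclideanSpace ℝ (Fin n)) (i : Fin n), f x i = A.mulVec x i := by
    intro x i
    rfl
  have hSmulVec : ∀ (x : Fin m → ℝ) (i : Fin n), S.mulVec x i = x (p i) := by
    intro x i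
    rw [Matrix.mulVec, dotProduct]
    rw [Finset.sum_eq_single (p i)
      (by intro b _ hb; simp only [hS]; rw [if_neg (Ne.symm hb), zero_mul])
      (by simp)]
    simp only [hS]
    rw [if_true, one_mul]
  have hLSinj : Function.Injective LS := by
    intro x y hxy
    ext k
    obtain ⟨i, hi⟩ := hp k
    have := congrArg (fun z : EuclideanSpace ℝ (Fin n) => z i) hxy
    have h1 : S.mulVec x i = S.mulVec y i := this
    rw [hSmulVec, hSmulVec, hi] at h1
    exact h1
  set U : Submodule ℝ (EuclideanSpace ℝ (Fin n)) := LinearMap.range LS with hU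
  have hfinU : Module.finrank ℝ U = m := by
    rw [hU, LinearMap.finrank_range_of_inj hLSinj]; exact finrank_euclideanSpace_fin
  have hcomp : ∀ (x : EuclideanSpace ℝ (Fin m)), f (LS x) = LS (Matrix.toEuclideanLin B x) := by
    intro x
    ext i
    have h1 : f (LS x) i = A.mulVec (S.mulVec x) i := rfl
    have h2 : LS (Matrix.toEuclideanLin B x) i = S.mulVec (B.mulVec x) i := rfl
    rw [h1, h2, Matrix.mulVec_mulVec, Matrix.mulVec_mulVec, hASSB]
  have hUinv : ∀ u ∈ U, f u ∈ U := by
    rintro u ⟨x, rfl⟩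
    exact ⟨Matrix.toEuclideanLin B x, (hcomp x).symm⟩
  set W : Submodule ℝ (EuclideanSpace ℝ (Fin n)) := Uᗮ with hW
  have hWinv : ∀ x ∈ W, f x ∈ W := by
    intro x hx
    rw [hW, Submodule.mem_orthogonal]
    intro u hu
    rw [← hfs u x]
    exact hx (f u) (hUinv u hu)
  have hfinW : Module.finrank ℝ W = n - m := by
    have h1 := Submodule.finrank_add_finrank_orthogonal U
    rw [hfinU] at h1
    rw [show Module.finrank ℝ (EuclideanSpace ℝ (Fin n)) = n from finrank_euclideanSpace_fin, ← hW] at h1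
    omega
  set fW := f.restrict hWinv with hfW
  have hfWs : fW.IsSymmetric := hfs.restrict_invariant hWinv
  set b := hfWs.eigenvectorBasis hfinW with hb
  set w : Fin (n - m) → (Fin n → ℝ) := fun j => ((b j : EuclideanSpace ℝ (Fin n)) : Fin n → ℝ) with hw
  have hweig : ∀ j, ∃ μ : ℝ, A.mulVec (w j) = μ • w j := by
    intro j
    refine ⟨hfWs.eigenvalues hfinW j, ?_⟩
    have h1 := hfWs.apply_eigenvectorBasis hfinW j
    have h2 : f ((b j : W) : EuclideanSpace ℝ (Fin n))
        = (hfWs.eigenvalues hfinW j : ℝ) • ((b j : W) : EuclideanSpace ℝ (Fin n)) := by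
      calc f ((b j : W) : EuclideanSpace ℝ (Fin n)) = ((fW (b j) : W) : EuclideanSpace ℝ (Fin n)) :=
            (LinearMap.restrict_coe_apply f hWinv (b j)).symm
        _ = (((hfWs.eigenvalues hfinW j : ℝ) • b j : W) : EuclideanSpace ℝ (Fin n)) := by rw [h1]; norm_cast
        _ = (hfWs.eigenvalues hfinW j : ℝ) • ((b j : W) : EuclideanSpace ℝ (Fin n)) := rfl
    ext i
    have h3 := congrArg (fun z : EuclideanSpace ℝ (Fin n) => z i) h2
    exact h3
  have hSTw : ∀ j, Sᵀ.mulVec (w j) = 0 := by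
    intro j
    ext k
    have hcol : LS ((WithLp.linearEquiv 2 ℝ (Fin m → ℝ)).symm (Pi.single k 1)) ∈ U := ⟨_, rfl⟩
    have hmem : ((b j : W) : EuclideanSpace ℝ (Fin n)) ∈ Uᗮ := by rw [← hW]; exact (b j).2
    have hinner := (Submodule.mem_orthogonal U _).1 hmem _ hcol
    rw [PiLp.inner_apply] at hinner
    simp only [RCLike.inner_apply, starRingEnd_apply, star_trivial] at hinner
    rw [Matrix.mulVec, dotProduct, Pi.zero_apply]
    refine Eq.trans (Finset.sum_congr rfl ?_) hinner
    intro i _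
    rw [Matrix.transpose_apply, mul_comm]
    congr 1
    rw [show LS ((WithLp.linearEquiv 2 ℝ (Fin m → ℝ)).symm (Pi.single k 1)) i
        = S.mulVec (Pi.single k 1) i from rfl, hSmulVec]
    simp [hS, Pi.single_apply]
  set fam : Fin m ⊕ Fin (n - m) → (Fin n → ℝ) := Sum.elim (fun k => S.mulVec (v k)) w with hfam
  set e := WithLp.linearEquiv 2 ℝ (Fin n → ℝ) with he
  set fam' : Fin m ⊕ Fin (n - m) → EuclideanSpace ℝ (Fin n) :=
    Sum.elim (fun k => LS ((WithLp.linearEquiv 2 ℝ (Fin m → ℝ)).symm (v k)))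
      (fun j => ((b j : W) : EuclideanSpace ℝ (Fin n))) with hfam'
  have hfamfam' : fam = fun x => e (fam' x) := by
    funext x
    cases x with
    | inl k => rfl
    | inr j => rfl
  have h1 : Submodule.span ℝ
      (Set.range fun k => LS ((WithLp.linearEquiv 2 ℝ (Fin m → ℝ)).symm (v k))) = U := by
    have hr : (Set.range fun k => LS ((WithLp.linearEquiv 2 ℝ (Fin m → ℝ)).symm (v k)))
        = ⇑LS '' (⇑(WithLp.linearEquiv 2 ℝ (Fin m → ℝ)).symm '' Set.range v) := by
      rw [← Set.range_comp, ← Set.range_comp]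
      rfl
    rw [hr, Submodule.span_image, Submodule.span_image_linearEquiv, hvSpan, Submodule.map_top,
      LinearMap.range_eq_top.2 (WithLp.linearEquiv 2 ℝ (Fin m → ℝ)).symm.surjective,
      Submodule.map_top]
  have h2 : Submodule.span ℝ
      (Set.range fun j => ((b j : W) : EuclideanSpace ℝ (Fin n))) = W := by
    have hr : (Set.range fun j => ((b j : W) : EuclideanSpace ℝ (Fin n)))
        = ⇑W.subtype '' Set.range ⇑b.toBasis := by
      rw [← Set.range_comp]
      congr 1
    rw [hr, Submodule.span_image, b.toBasis.span_eq, Submodule.map_top, Submodule.range_subtype]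
  have hspan' : Submodule.span ℝ (Set.range fam') = ⊤ := by
    rw [hfam', Set.Sum.elim_range, Submodule.span_union, h1, h2, hW]
    exact Submodule.sup_orthogonal_of_hasOrthogonalProjection
  have hspan : Submodule.span ℝ (Set.range fam) = ⊤ := by
    rw [hfamfam', show (Set.range fun x => e (fam' x)) = ⇑e '' Set.range fam' from
      Set.range_comp _ _, Submodule.span_image_linearEquiv, hspan', Submodule.map_top,
      LinearMap.range_eq_top.2 e.surjective]
  have hcard : Fintype.card (Fin m ⊕ Fin (n - m)) = Module.finrank ℝ (Fin n → ℝ) := by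
    rw [Module.finrank_fin_fun, Fintype.card_sum, Fintype.card_fin, Fintype.card_fin]
    omega
  have hLI : LinearIndependent ℝ fam :=
    linearIndependent_of_top_le_span_of_card_eq_finrank (by rw [hspan]) hcard
  exact ⟨w, hweig, hSTw, hSvEig, hLI, hspan⟩
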